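/- Let A = {1, a, b} be a probability group with three distinct elements such that a⁻¹ = b. Then A is abelian, i.e. p(x·y=z) = p(y·x=z) for all x, y, z ∈ A. -/
import Mathlib


/-- A probability group (Harrison): a set `A` with a distinguished element `one`,
an inverse map `inv`, and a probability map `p` satisfying axioms (1)-(6). -/
structure ProbabilityGroup (A : Type*) where
  /-- the probability map: `p a b c` is `p(a·b = c)` -/
  p : A → A → A → ℝ
  /-- the unit element -/
  one : A
  /-- the inverse map -/
  inv : A → A
  p_nonneg : ∀ a b c, 0 ≤ p a b c
  finite_support : ∀ a b, {c | p a b c ≠ 0}.Finite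
  sum_eq_one : ∀ a b, ∑ᶠ c, p a b c = 1
  assoc : ∀ a b c d, ∑ᶠ x, p a b x * p x c d = ∑ᶠ y, p a y d * p b c y
  one_mul : ∀ a, p one a a = 1
  mul_one : ∀ a, p a one a = 1
  inv_pos : ∀ a, 0 < p a (inv a) one
  inv_unique : ∀ a b, 0 < p a b one → b = inv a
  p_inv : ∀ a b c, p a b c = p (inv b) (inv a) (inv c)
  inv_symm : ∀ a, p a (inv a) one = p (inv a) a one

/-- The size `s(a) = 1 / p(a·a⁻¹ = 1)` of an element of a probability group. -/
noncomputable def ProbabilityGroup.s {A : Type*} (P : ProbabilityGroup A) (a : A) : ℝ :=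
  1 / P.p a (P.inv a) P.one

/-- A probability group `{1, a, b}` with three distinct elements and `a⁻¹ = b` is abelian. -/
theorem probabilityGroup_card_three_invPair_abelian {A : Type*} (P : ProbabilityGroup A)
    (a b : A) (ha : a ≠ P.one) (hb : b ≠ P.one) (hab : a ≠ b)
    (henum : ∀ x : A, x = P.one ∨ x = a ∨ x = b)
    (hiab : P.inv a = b) :
    ∀ x y z : A, P.p x y z = P.p y x z := by
  classical
  have hone_a : P.one ≠ a := fun h => ha h.symm
  have hone_b : P.one ≠ b := fun h => hb h.symm
  have hba : b ≠ a := fun h => hab h.symm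
  have hinv_b : P.inv b = a := by
    have hpos : 0 < P.p a b P.one := by rw [← hiab]; exact P.inv_pos a
    have hsym : P.p a b P.one = P.p b a P.one := by
      have := P.inv_symm a; rwa [hiab] at this
    exact (P.inv_unique b a (by rw [← hsym]; exact hpos)).symm
  have sum3 : ∀ x y : A, P.p x y P.one + P.p x y a + P.p x y b = 1 := by
    intro x y
    have h := P.sum_eq_one x y
    rw [finsum_eq_finset_sum_of_support_subset _
      (s := ({P.one, a, b} : Finset A))
      (by intro c hc; rcases henum c with h|h|h <;> simp [h])] at h
    rw [Finset.sum_insert (by simp [hone_a, hone_b]),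
      Finset.sum_insert (by simp [hab]), Finset.sum_singleton] at h
    linarith
  have hzero : ∀ x y c0, P.p x y c0 = 1 → ∀ c, c ≠ c0 → P.p x y c = 0 := by
    intro x y c0 h1 c hc
    have s3 := sum3 x y
    have n1 := P.p_nonneg x y P.one
    have n2 := P.p_nonneg x y a
    have n3 := P.p_nonneg x y b
    rcases henum c0 with h0|h0|h0 <;> rcases henum c with h|h|h <;>
      subst h0 <;> subst h <;> first
        | exact absurd rfl hc
        | (rw [h1] at s3; linarith)
  have hcomm_one : ∀ y z : A, P.p P.one y z = P.p y P.one z := by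
    intro y z
    by_cases hz : z = y
    · subst hz; rw [P.one_mul, P.mul_one]
    · rw [hzero _ _ y (P.one_mul y) z hz, hzero _ _ y (P.mul_one y) z hz]
  have h1 : P.p a b P.one = P.p b a P.one := by
    have := P.inv_symm a; rwa [hiab] at this
  have h2 : P.p a b a = P.p a b b := by
    have := P.p_inv a b a; rwa [hinv_b, hiab] at this
  have h3 : P.p b a a = P.p b a b := by
    have := P.p_inv b a a; rwa [hinv_b, hiab] at this
  have key : ∀ z, P.p a b z = P.p b a z := by
    intro z
    have s1 := sum3 a b
    have s2 := sum3 b a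
    rcases henum z with h|h|h <;> subst h <;> linarith
  intro x y z
  rcases henum x with hx|hx|hx <;> rcases henum y with hy|hy|hy <;> rw [hx, hy] <;>
    first
      | rfl
      | exact hcomm_one _ z
      | exact (hcomm_one _ z).symm
      | exact key z
      | exact (key z).symm
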